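/- Let H ∈ (0, 1/2) and let c : ℝ → ℝ be a continuous even function for which there exists C₀ > 0 with |c(t)| ≤ C₀(1+|t|)^{2H−2} for all t ∈ ℝ. Then there exist constants κ > 0 and C > 0 such that for all T ≥ 1: (1/T²)·∫₀^{T} ∫₀^{t₁} ( ∫₀^{t₁} ∫₀^{t₂} (t₁−s₁)^{−H−1/2}(t₂−s₂)^{−H−1/2} |c(s₁−s₂)| ds₂ ds₁ )² dt₂ dt₁ ≤ C·T^{−κ}. -/

import Mathlib

open Real MeasureTheory


lemma integral_le_of_le {f g : ℝ → ℝ} {a b : ℝ} (hab : a ≤ b)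
    (hg : IntervalIntegrable g volume a b) (hg0 : ∀ x ∈ Set.Icc a b, 0 ≤ g x)
    (h : ∀ x ∈ Set.Icc a b, f x ≤ g x) :
    (∫ x in a..b, f x) ≤ ∫ x in a..b, g x := by
  by_cases hf : IntervalIntegrable f volume a b
  · exact intervalIntegral.integral_mono_on hab hf hg h
  · rw [intervalIntegral.integral_undef hf]
    exact intervalIntegral.integral_nonneg hab hg0

lemma ii_kernel {e p : ℝ} (he1 : -1 < e) (hp : p ≤ 0) (d a b : ℝ)
    (ha : 0 ≤ a) (hb : 0 ≤ b) :
    IntervalIntegrable (fun v => v ^ e * (1 + |v - d|) ^ p) volume a b := by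
  apply (intervalIntegral.intervalIntegrable_rpow' (a := a) (b := b) he1).mono_fun
  · apply Measurable.aestronglyMeasurable
    fun_prop
  · rw [Filter.EventuallyLE, ae_restrict_iff' measurableSet_uIoc]
    apply Filter.Eventually.of_forall
    intro x hx
    have hx0 : 0 < x := lt_of_le_of_lt (le_min ha hb) hx.1
    have h1 : (0:ℝ) ≤ x ^ e := Real.rpow_nonneg hx0.le e
    have h2 : (1 + |x - d|) ^ p ≤ 1 :=
      Real.rpow_le_one_of_one_le_of_nonpos (le_add_of_nonneg_right (abs_nonneg _)) hp
    have h3 : (0:ℝ) ≤ (1 + |x - d|) ^ p := Real.rpow_nonneg (by positivity) p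
    simp only [Real.norm_eq_abs]
    rw [abs_of_nonneg (by positivity), abs_of_nonneg h1]
    exact mul_le_of_le_one_right h1 h2

lemma int_one_add {p : ℝ} (hp : p ≠ -1) {b : ℝ} (hb : 0 ≤ b) :
    ∫ x in (0:ℝ)..b, (1 + x) ^ p = ((1 + b) ^ (p + 1) - 1) / (p + 1) := by
  have h1 : (∫ x in (0:ℝ)..b, (1 + x) ^ p) = ∫ x in (0:ℝ)..b, (fun y : ℝ => y ^ p) (x + 1) := by
    apply intervalIntegral.integral_congr
    intro x _; simp [add_comm]
  rw [h1, intervalIntegral.integral_comp_add_right (fun y : ℝ => y ^ p) 1, zero_add]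
  rw [integral_rpow (Or.inr ⟨hp, by
    rw [Set.uIcc_of_le (by linarith : (1:ℝ) ≤ b + 1)]
    rintro ⟨h0, _⟩; linarith⟩)]
  rw [Real.one_rpow, add_comm b 1]

lemma int_abs_kernel_le {p : ℝ} (hp1 : p ≠ -1) {a b R : ℝ}
    (h1 : -R ≤ a) (h2 : a ≤ b) (h3 : b ≤ R) :
    ∫ x in a..b, (1 + |x|) ^ p ≤ 2 * (((1 + R) ^ (p + 1) - 1) / (p + 1)) := by
  have hR : 0 ≤ R := by linarith
  have hcont : Continuous fun x : ℝ => (1 + |x|) ^ p :=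
    (continuous_const.add continuous_abs).rpow_const
      (fun x => Or.inl (show (1 + |x| : ℝ) ≠ 0 by positivity))
  have hint : ∀ u v : ℝ, IntervalIntegrable (fun x => (1 + |x|) ^ p) volume u v :=
    fun u v => hcont.intervalIntegrable u v
  have hmono : (∫ x in a..b, (1 + |x|) ^ p) ≤ ∫ x in (-R)..R, (1 + |x|) ^ p := by
    apply intervalIntegral.integral_mono_interval h1 h2 h3 _ (hint _ _)
    exact Filter.Eventually.of_forall fun x => Real.rpow_nonneg (by positivity) p
  have hsplit : (∫ x in (-R)..R, (1 + |x|) ^ p)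
      = (∫ x in (-R)..(0:ℝ), (1 + |x|) ^ p) + ∫ x in (0:ℝ)..R, (1 + |x|) ^ p :=
    (intervalIntegral.integral_add_adjacent_intervals (hint _ _) (hint _ _)).symm
  have hneg : (∫ x in (-R)..(0:ℝ), (1 + |x|) ^ p) = ∫ x in (0:ℝ)..R, (1 + |x|) ^ p := by
    have h := intervalIntegral.integral_comp_neg (a := -R) (b := 0) (fun x => (1 + |x|) ^ p)
    simp only [abs_neg, neg_zero, neg_neg] at h
    exact h
  have heq : (∫ x in (0:ℝ)..R, (1 + |x|) ^ p) = ((1 + R) ^ (p + 1) - 1) / (p + 1) := by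
    rw [← int_one_add hp1 hR]
    apply intervalIntegral.integral_congr
    intro x hx
    rw [Set.uIcc_of_le hR] at hx
    simp only []
    rw [abs_of_nonneg hx.1]
  rw [hsplit, hneg, heq] at hmono
  linarith

lemma ii_kernel0 {e p : ℝ} (he1 : -1 < e) (hp : p ≤ 0) (a b : ℝ)
    (ha : 0 ≤ a) (hb : 0 ≤ b) :
    IntervalIntegrable (fun v => v ^ e * (1 + |v|) ^ p) volume a b := by
  simpa using ii_kernel he1 hp 0 a b ha hb

lemma int_rpow_base {H : ℝ} (h1 : 0 < H) (h2 : H < 1/2) {s : ℝ} (hs : 0 ≤ s) :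
    (∫ v in (0:ℝ)..s, v ^ (-H - 1/2)) = s ^ (1/2 - H) / (1/2 - H) := by
  rw [integral_rpow (Or.inl (by linarith : (-1:ℝ) < -H - 1/2))]
  rw [Real.zero_rpow (by intro h; linarith : -H - 1/2 + 1 ≠ 0)]
  have he : -H - 1/2 + 1 = 1/2 - H := by ring
  rw [he, sub_zero]

lemma lemB {H : ℝ} (h1 : 0 < H) (h2 : H < 1/2) {t : ℝ} (ht : 0 ≤ t) :
    (∫ v in (0:ℝ)..t, v ^ (-H - 1/2) * (1 + |v|) ^ (3*H - 3/2))
      ≤ 1/(1/2 - H) + 1/(1 - 2*H) := by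
  have he1 : (-1 : ℝ) < -H - 1/2 := by linarith
  have hρ : 3*H - 3/2 ≤ 0 := by linarith
  have hpos1 : (0:ℝ) < 1/2 - H := by linarith
  have hpos2 : (0:ℝ) < 1 - 2*H := by linarith
  have piece1 : ∀ s : ℝ, 0 ≤ s → s ≤ 1 →
      (∫ v in (0:ℝ)..s, v ^ (-H - 1/2) * (1 + |v|) ^ (3*H - 3/2)) ≤ 1/(1/2 - H) := by
    intro s hs hs1
    have step : (∫ v in (0:ℝ)..s, v ^ (-H - 1/2) * (1 + |v|) ^ (3*H - 3/2))
        ≤ ∫ v in (0:ℝ)..s, v ^ (-H - 1/2) := by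
      apply integral_le_of_le hs (intervalIntegral.intervalIntegrable_rpow' he1)
      · intro x hx; exact Real.rpow_nonneg hx.1 _
      · intro x hx
        exact mul_le_of_le_one_right (Real.rpow_nonneg hx.1 _)
          (Real.rpow_le_one_of_one_le_of_nonpos (le_add_of_nonneg_right (abs_nonneg _)) hρ)
    rw [int_rpow_base h1 h2 hs] at step
    refine step.trans ?_
    gcongr
    · exact Real.rpow_le_one hs hs1 (by linarith)
  rcases le_total t 1 with h | h
  · refine (piece1 t ht h).trans ?_
    have : (0:ℝ) < 1/(1 - 2*H) := by positivity
    linarith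
  · have ht1 : (0:ℝ) ≤ 1 := zero_le_one
    have hsplit := intervalIntegral.integral_add_adjacent_intervals
      (ii_kernel0 he1 hρ 0 1 le_rfl zero_le_one)
      (ii_kernel0 he1 hρ 1 t zero_le_one ht)
    rw [← hsplit]
    have hp2 : (∫ v in (1:ℝ)..t, v ^ (-H - 1/2) * (1 + |v|) ^ (3*H - 3/2))
        ≤ 1/(1 - 2*H) := by
      have hnm : (0:ℝ) ∉ Set.uIcc (1:ℝ) t := by
        rw [Set.uIcc_of_le h]; rintro ⟨h0, _⟩; linarith
      have step : (∫ v in (1:ℝ)..t, v ^ (-H - 1/2) * (1 + |v|) ^ (3*H - 3/2))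
          ≤ ∫ v in (1:ℝ)..t, v ^ (2*H - 2) := by
        apply integral_le_of_le h
          (intervalIntegral.intervalIntegrable_rpow (Or.inr hnm))
        · intro x hx; exact Real.rpow_nonneg (by linarith [hx.1]) _
        · intro x hx
          have hx0 : (0:ℝ) < x := by linarith [hx.1]
          have hb : (1 + |x|) ^ (3*H - 3/2) ≤ x ^ (3*H - 3/2) :=
            Real.rpow_le_rpow_of_nonpos hx0 (by rw [abs_of_nonneg hx0.le]; linarith) hρ
          calc x ^ (-H - 1/2) * (1 + |x|) ^ (3*H - 3/2)
              ≤ x ^ (-H - 1/2) * x ^ (3*H - 3/2) :=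
                mul_le_mul_of_nonneg_left hb (Real.rpow_nonneg hx0.le _)
            _ = x ^ (2*H - 2) := by
                rw [← Real.rpow_add hx0]; congr 1; ring
      refine step.trans ?_
      rw [integral_rpow (Or.inr ⟨by intro hh; linarith, hnm⟩)]
      rw [Real.one_rpow]
      have ha0 : (0:ℝ) ≤ t ^ (2*H - 2 + 1) := Real.rpow_nonneg (by linarith) _
      have key : (t ^ (2*H - 2 + 1) - 1) / (2*H - 2 + 1)
          = (1 - t ^ (2*H - 2 + 1)) / (1 - 2*H) := by
        rw [div_eq_div_iff (by linarith) (by linarith)]; ring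
      rw [key]
      gcongr
      · linarith
    have hp1 := piece1 1 zero_le_one le_rfl
    linarith

lemma two_rpow_ge_half {e : ℝ} (he : -1 ≤ e) : (1:ℝ)/2 ≤ (2:ℝ) ^ e := by
  have h := Real.rpow_le_rpow_of_exponent_le one_le_two he
  rw [Real.rpow_neg_one] at h
  norm_num at h
  linarith

lemma div_two_rpow_le {x e : ℝ} (hx : 0 < x) (he1 : -2 ≤ e) (he2 : e ≤ 0) :
    (x/2) ^ e ≤ 4 * x ^ e := by
  rw [Real.div_rpow hx.le (by norm_num)]
  have h2 : (1:ℝ)/4 ≤ (2:ℝ) ^ e := by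
    have h := Real.rpow_le_rpow_of_exponent_le one_le_two he1
    have h4 : (2:ℝ) ^ (-2:ℝ) = 1/4 := by
      rw [show (-2:ℝ) = -((2:ℕ):ℝ) by norm_num, Real.rpow_neg (by norm_num),
        Real.rpow_natCast]
      norm_num
    rw [h4] at h
    linarith
  have hx0 : 0 ≤ x ^ e := Real.rpow_nonneg hx.le e
  rw [div_le_iff₀ (by linarith : (0:ℝ) < (2:ℝ) ^ e)]
  nlinarith

lemma dpow_le_onedpow {d e : ℝ} (hd : 1 ≤ d) (he1 : -1 ≤ e) (he2 : e ≤ 0) :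
    d ^ e ≤ 2 * (1 + d) ^ e := by
  have h1 : (2*d) ^ e ≤ (1 + d) ^ e :=
    Real.rpow_le_rpow_of_nonpos (by linarith) (by linarith) he2
  rw [Real.mul_rpow (by norm_num) (by linarith)] at h1
  have h2 : (1:ℝ)/2 ≤ (2:ℝ) ^ e := two_rpow_ge_half he1
  have hd0 : (0:ℝ) ≤ d ^ e := Real.rpow_nonneg (by linarith) e
  nlinarith

set_option maxHeartbeats 1000000 in
lemma lemG1 {H : ℝ} (h1 : 0 < H) (h2 : H < 1/2) :
    ∃ K > (0:ℝ), ∀ d t : ℝ, 0 ≤ t →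
      (∫ v in (0:ℝ)..t, v ^ (-H - 1/2) * (1 + |v - d|) ^ (2*H - 2))
        ≤ K * (1 + |d|) ^ (-H - 1/2) := by
  have hpos1 : (0:ℝ) < 1/2 - H := by linarith
  have hpos2 : (0:ℝ) < 1 - 2*H := by linarith
  set M : ℝ := 1/(1/2 - H) + 1/(1 - 2*H) with hM
  have hMpos : 0 < M := by positivity
  refine ⟨9*M + 8/(1/2 - H) + 16/(1 - 2*H), by positivity, ?_⟩
  intro d t ht
  have he1 : (-1:ℝ) < -H - 1/2 := by linarith
  have hp : 2*H - 2 ≤ 0 := by linarith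
  have habs0 : (0:ℝ) ≤ (1 + |d|) ^ (-H - 1/2) := Real.rpow_nonneg (by positivity) _
  rcases le_total d 1 with hd | hd
  · -- case d ≤ 1
    have key : ∀ v ∈ Set.Icc (0:ℝ) t,
        v ^ (-H - 1/2) * (1 + |v - d|) ^ (2*H - 2)
          ≤ (9 * (1 + |d|) ^ (-H - 1/2)) * (v ^ (-H - 1/2) * (1 + |v|) ^ (3*H - 3/2)) := by
      intro v hv
      have hv0 : (0:ℝ) ≤ v := hv.1
      have hfac : (1 + |v - d|) ^ (2*H - 2)
          ≤ 9 * (1 + |d|) ^ (-H - 1/2) * (1 + |v|) ^ (3*H - 3/2) := by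
        rw [abs_of_nonneg hv0]
        rcases le_total d 0 with hd0 | hd0
        · have habs : |v - d| = v - d := abs_of_nonneg (by linarith)
          have hdabs : |d| = -d := abs_of_nonpos hd0
          rw [habs, hdabs]
          have hb0 : (0:ℝ) < 1 + (v - d) := by linarith
          have hsplit : (1 + (v - d)) ^ (2*H - 2)
              = (1 + (v - d)) ^ (-H - 1/2) * (1 + (v - d)) ^ (3*H - 3/2) := by
            rw [← Real.rpow_add hb0]; congr 1; ring
          rw [hsplit]
          have e1 : (1 + (v - d)) ^ (-H - 1/2) ≤ (1 + -d) ^ (-H - 1/2) :=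
            Real.rpow_le_rpow_of_nonpos (by linarith) (by linarith) (by linarith)
          have e2 : (1 + (v - d)) ^ (3*H - 3/2) ≤ (1 + v) ^ (3*H - 3/2) :=
            Real.rpow_le_rpow_of_nonpos (by linarith) (by linarith) (by linarith)
          have hn1 : (0:ℝ) ≤ (1 + -d) ^ (-H - 1/2) := Real.rpow_nonneg (by linarith) _
          have hn2 : (0:ℝ) ≤ (1 + v) ^ (3*H - 3/2) := Real.rpow_nonneg (by linarith) _
          have hn3 : (0:ℝ) ≤ (1 + (v - d)) ^ (-H - 1/2) := Real.rpow_nonneg hb0.le _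
          nlinarith [mul_le_mul e1 e2 (Real.rpow_nonneg hb0.le _) hn1]
        · -- 0 ≤ d ≤ 1
          have hA : (1 + v)/2 ≤ 1 + |v - d| := by
            rcases le_total v 1 with hv1 | hv1
            · have := abs_nonneg (v - d); linarith
            · have := le_abs_self (v - d); linarith
          have e0 : (1 + |v - d|) ^ (2*H - 2) ≤ ((1 + v)/2) ^ (2*H - 2) :=
            Real.rpow_le_rpow_of_nonpos (by linarith) hA (by linarith)
          have e1 : ((1 + v)/2) ^ (2*H - 2) ≤ 4 * (1 + v) ^ (2*H - 2) :=
            div_two_rpow_le (by linarith) (by linarith) (by linarith)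
          have e2 : (1 + v) ^ (2*H - 2) ≤ (1 + v) ^ (3*H - 3/2) :=
            Real.rpow_le_rpow_of_exponent_le (by linarith) (by linarith)
          have e3 : (1:ℝ)/2 ≤ (1 + |d|) ^ (-H - 1/2) := by
            have ha : (1 + |d|) ≤ 2 := by
              rw [abs_of_nonneg hd0]; linarith
            have hb := Real.rpow_le_rpow_of_nonpos (by positivity : (0:ℝ) < 1 + |d|) ha
              (by linarith : -H - 1/2 ≤ 0)
            have hc := two_rpow_ge_half (by linarith : (-1:ℝ) ≤ -H - 1/2)
            linarith
          have hn2 : (0:ℝ) ≤ (1 + v) ^ (3*H - 3/2) := Real.rpow_nonneg (by linarith) _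
          nlinarith
      have hvn : (0:ℝ) ≤ v ^ (-H - 1/2) := Real.rpow_nonneg hv0 _
      calc v ^ (-H - 1/2) * (1 + |v - d|) ^ (2*H - 2)
          ≤ v ^ (-H - 1/2) * (9 * (1 + |d|) ^ (-H - 1/2) * (1 + |v|) ^ (3*H - 3/2)) :=
            mul_le_mul_of_nonneg_left hfac hvn
        _ = (9 * (1 + |d|) ^ (-H - 1/2)) * (v ^ (-H - 1/2) * (1 + |v|) ^ (3*H - 3/2)) := by
            ring
    have hintg : IntervalIntegrable
        (fun v => (9 * (1 + |d|) ^ (-H - 1/2)) * (v ^ (-H - 1/2) * (1 + |v|) ^ (3*H - 3/2)))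
        volume 0 t := by
      apply IntervalIntegrable.const_mul
      simpa using ii_kernel he1 (by linarith : 3*H - 3/2 ≤ 0) 0 0 t le_rfl ht
    have step := integral_le_of_le ht hintg
      (fun x hx => mul_nonneg (by positivity)
        (mul_nonneg (Real.rpow_nonneg hx.1 _) (Real.rpow_nonneg (by positivity) _))) key
    rw [intervalIntegral.integral_const_mul] at step
    have hB := lemB h1 h2 ht
    calc (∫ v in (0:ℝ)..t, v ^ (-H - 1/2) * (1 + |v - d|) ^ (2*H - 2))
        ≤ (9 * (1 + |d|) ^ (-H - 1/2)) *
            ∫ v in (0:ℝ)..t, v ^ (-H - 1/2) * (1 + |v|) ^ (3*H - 3/2) := step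
      _ ≤ (9 * (1 + |d|) ^ (-H - 1/2)) * M := by
          apply mul_le_mul_of_nonneg_left hB (by positivity)
      _ ≤ (9*M + 8/(1/2 - H) + 16/(1 - 2*H)) * (1 + |d|) ^ (-H - 1/2) := by
          have h8a : (0:ℝ) ≤ 8/(1/2 - H) := by positivity
          have h8b : (0:ℝ) ≤ 16/(1 - 2*H) := by positivity
          nlinarith
  · -- case 1 ≤ d
    have hd0 : (0:ℝ) < d := by linarith
    have hdabs : |d| = d := abs_of_pos hd0
    set m : ℝ := min (d/2) t with hm
    have hm0 : (0:ℝ) ≤ m := le_min (by linarith) ht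
    have hmt : m ≤ t := min_le_right _ _
    have hmd : m ≤ d/2 := min_le_left _ _
    have hint1 := ii_kernel he1 hp d 0 m le_rfl hm0
    have hint2 := ii_kernel he1 hp d m t hm0 ht
    have hsplit := intervalIntegral.integral_add_adjacent_intervals hint1 hint2
    rw [← hsplit, hdabs]
    have hp1 : (∫ v in (0:ℝ)..m, v ^ (-H - 1/2) * (1 + |v - d|) ^ (2*H - 2))
        ≤ 8/(1/2 - H) * (1 + d) ^ (-H - 1/2) := by
      have hgint : IntervalIntegrable
          (fun v => (1 + d/2) ^ (2*H - 2) * v ^ (-H - 1/2)) volume 0 m :=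
        (intervalIntegral.intervalIntegrable_rpow' he1).const_mul _
      have step := integral_le_of_le hm0 hgint
        (fun x hx => by
          have := Real.rpow_nonneg hx.1 (-H - 1/2)
          have : (0:ℝ) ≤ (1 + d/2) ^ (2*H - 2) := Real.rpow_nonneg (by linarith) _
          positivity)
        (fun x hx => by
          have hx0 := hx.1
          have hxm := hx.2
          have hxd : x - d ≤ 0 := by
            have : x ≤ d/2 := le_trans hxm hmd
            linarith
          have habs : |x - d| = d - x := by rw [abs_of_nonpos hxd]; ring
          have hb : (1 + |x - d|) ^ (2*H - 2) ≤ (1 + d/2) ^ (2*H - 2) := by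
            rw [habs]
            apply Real.rpow_le_rpow_of_nonpos (by linarith)
            · have : x ≤ d/2 := le_trans hxm hmd
              linarith
            · linarith
          calc x ^ (-H - 1/2) * (1 + |x - d|) ^ (2*H - 2)
              ≤ x ^ (-H - 1/2) * (1 + d/2) ^ (2*H - 2) :=
                mul_le_mul_of_nonneg_left hb (Real.rpow_nonneg hx0 _)
            _ = (1 + d/2) ^ (2*H - 2) * x ^ (-H - 1/2) := by ring)
      rw [intervalIntegral.integral_const_mul, int_rpow_base h1 h2 hm0] at step
      refine step.trans ?_
      -- bound (1+d/2)^(2H-2) * (m^(1/2-H)/(1/2-H))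
      have c1 : (1 + d/2) ^ (2*H - 2) ≤ (d/2) ^ (2*H - 2) :=
        Real.rpow_le_rpow_of_nonpos (by linarith) (by linarith) (by linarith)
      have c2 : m ^ (1/2 - H) ≤ (d/2) ^ (1/2 - H) :=
        Real.rpow_le_rpow hm0 hmd (by linarith)
      have c3 : (d/2) ^ (2*H - 2) * (d/2) ^ (1/2 - H) = (d/2) ^ (H - 3/2) := by
        rw [← Real.rpow_add (by linarith)]; congr 1; ring
      have c4 : (d/2) ^ (H - 3/2) ≤ 4 * d ^ (H - 3/2) :=
        div_two_rpow_le hd0 (by linarith) (by linarith)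
      have c5 : d ^ (H - 3/2) ≤ d ^ (-H - 1/2) :=
        Real.rpow_le_rpow_of_exponent_le hd (by linarith)
      have c6 : d ^ (-H - 1/2) ≤ 2 * (1 + d) ^ (-H - 1/2) :=
        dpow_le_onedpow hd (by linarith) (by linarith)
      have n1 : (0:ℝ) ≤ (1 + d/2) ^ (2*H - 2) := Real.rpow_nonneg (by linarith) _
      have n2 : (0:ℝ) ≤ m ^ (1/2 - H) := Real.rpow_nonneg hm0 _
      have n3 : (0:ℝ) ≤ (d/2) ^ (2*H - 2) := Real.rpow_nonneg (by linarith) _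
      have n4 : (0:ℝ) ≤ (d/2) ^ (1/2 - H) := Real.rpow_nonneg (by linarith) _
      have n5 : (0:ℝ) ≤ d ^ (H - 3/2) := Real.rpow_nonneg hd0.le _
      have n6 : (0:ℝ) ≤ (1 + d) ^ (-H - 1/2) := Real.rpow_nonneg (by linarith) _
      have main : (1 + d/2) ^ (2*H - 2) * m ^ (1/2 - H) ≤ 8 * (1 + d) ^ (-H - 1/2) := by
        have hprod := mul_le_mul c1 c2 n2 n3
        linarith [hprod, c4, c3 ▸ hprod, (by linarith : 4 * d ^ (H - 3/2) ≤ 4 * d ^ (-H - 1/2)),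
          (by linarith : 4 * d ^ (-H - 1/2) ≤ 8 * (1 + d) ^ (-H - 1/2))]
      calc (1 + d/2) ^ (2*H - 2) * (m ^ (1/2 - H) / (1/2 - H))
          = ((1 + d/2) ^ (2*H - 2) * m ^ (1/2 - H)) / (1/2 - H) := by ring
        _ ≤ (8 * (1 + d) ^ (-H - 1/2)) / (1/2 - H) := by gcongr
        _ = 8/(1/2 - H) * (1 + d) ^ (-H - 1/2) := by ring
    have hp2 : (∫ v in m..t, v ^ (-H - 1/2) * (1 + |v - d|) ^ (2*H - 2))
        ≤ 16/(1 - 2*H) * (1 + d) ^ (-H - 1/2) := by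
      by_cases hc : t ≤ d/2
      · have hmeq : m = t := min_eq_right hc
        rw [hmeq, intervalIntegral.integral_same]
        have : (0:ℝ) ≤ (1 + d) ^ (-H - 1/2) := Real.rpow_nonneg (by linarith) _
        positivity
      · push_neg at hc
        have hmeq : m = d/2 := min_eq_left hc.le
        have hker : Continuous fun v : ℝ => (1 + |v - d|) ^ (2*H - 2) :=
          (continuous_const.add (continuous_id.sub continuous_const).abs).rpow_const
            (fun x => Or.inl (show (1 + |x - d| : ℝ) ≠ 0 by positivity))
        have hgint : IntervalIntegrable
            (fun v => (d/2) ^ (-H - 1/2) * (1 + |v - d|) ^ (2*H - 2)) volume m t :=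
          (hker.intervalIntegrable _ _).const_mul _
        have step := integral_le_of_le hmt hgint
          (fun x hx => by
            have : (0:ℝ) ≤ (d/2) ^ (-H - 1/2) := Real.rpow_nonneg (by linarith) _
            have : (0:ℝ) ≤ (1 + |x - d|) ^ (2*H - 2) := Real.rpow_nonneg (by positivity) _
            positivity)
          (fun x hx => by
            have hx1 : d/2 ≤ x := by rw [hmeq] at hx; exact hx.1
            have hb : x ^ (-H - 1/2) ≤ (d/2) ^ (-H - 1/2) :=
              Real.rpow_le_rpow_of_nonpos (by linarith) hx1 (by linarith)
            exact mul_le_mul_of_nonneg_right hb (Real.rpow_nonneg (by positivity) _))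
        rw [intervalIntegral.integral_const_mul] at step
        refine step.trans ?_
        have hshift : (∫ v in m..t, (1 + |v - d|) ^ (2*H - 2))
            = ∫ x in (m - d)..(t - d), (1 + |x|) ^ (2*H - 2) :=
          intervalIntegral.integral_comp_sub_right (fun x => (1 + |x|) ^ (2*H - 2)) d
        have hbound : (∫ x in (m - d)..(t - d), (1 + |x|) ^ (2*H - 2))
            ≤ 2 * (((1 + t) ^ (2*H - 2 + 1) - 1) / (2*H - 2 + 1)) := by
          apply int_abs_kernel_le (by intro hh; linarith)
          · rw [hmeq]; linarith
          · rw [hmeq]; linarith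
          · linarith
        have hbound2 : (∫ v in m..t, (1 + |v - d|) ^ (2*H - 2)) ≤ 2 / (1 - 2*H) := by
          rw [hshift]
          refine hbound.trans ?_
          have hx0 : (0:ℝ) ≤ (1 + t) ^ (2*H - 2 + 1) := Real.rpow_nonneg (by linarith) _
          have key : ((1 + t) ^ (2*H - 2 + 1) - 1) / (2*H - 2 + 1)
              = (1 - (1 + t) ^ (2*H - 2 + 1)) / (1 - 2*H) := by
            rw [div_eq_div_iff (by linarith) (by linarith)]; ring
          rw [key]
          have h9 : (1 - (1 + t) ^ (2*H - 2 + 1)) / (1 - 2*H) ≤ 1 / (1 - 2*H) := by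
            gcongr
            linarith
          rw [div_eq_mul_one_div 2 (1 - 2*H)]
          linarith
        have hdp : (d/2) ^ (-H - 1/2) ≤ 8 * (1 + d) ^ (-H - 1/2) := by
          have ha := div_two_rpow_le hd0 (by linarith : (-2:ℝ) ≤ -H - 1/2) (by linarith)
          have hb := dpow_le_onedpow hd (by linarith : (-1:ℝ) ≤ -H - 1/2) (by linarith)
          have : (0:ℝ) ≤ d ^ (-H - 1/2) := Real.rpow_nonneg hd0.le _
          nlinarith
        have hintn : (0:ℝ) ≤ ∫ v in m..t, (1 + |v - d|) ^ (2*H - 2) :=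
          intervalIntegral.integral_nonneg hmt
            (fun x _ => Real.rpow_nonneg (by positivity) _)
        have n6 : (0:ℝ) ≤ (1 + d) ^ (-H - 1/2) := Real.rpow_nonneg (by linarith) _
        have n7 : (0:ℝ) ≤ (d/2) ^ (-H - 1/2) := Real.rpow_nonneg (by linarith) _
        calc (d/2) ^ (-H - 1/2) * ∫ v in m..t, (1 + |v - d|) ^ (2*H - 2)
            ≤ (8 * (1 + d) ^ (-H - 1/2)) * (2 / (1 - 2*H)) := by
              apply mul_le_mul hdp hbound2 hintn (by positivity)
          _ = 16/(1 - 2*H) * (1 + d) ^ (-H - 1/2) := by ring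
    have n6 : (0:ℝ) ≤ (1 + d) ^ (-H - 1/2) := Real.rpow_nonneg (by linarith) _
    have n7 : (0:ℝ) ≤ 9 * M * (1 + d) ^ (-H - 1/2) := by positivity
    nlinarith [hp1, hp2]

set_option maxHeartbeats 1000000 in
lemma lemG2 {H : ℝ} (h1 : 0 < H) (h2 : H < 1/2) :
    ∃ K > (0:ℝ), ∀ τ t : ℝ, 0 ≤ τ → τ ≤ t →
      (∫ u in (0:ℝ)..t, u ^ (-H - 1/2) * (1 + |u - τ|) ^ (-H - 1/2))
        ≤ K * ((1 + τ) ^ (-(2*H)) + (1 + τ) ^ (-H - 1/2) * (1 + t) ^ (1/2 - H)) := by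
  have hpos1 : (0:ℝ) < 1/2 - H := by linarith
  refine ⟨4/(1/2 - H), by positivity, ?_⟩
  intro τ t hτ0 hτt
  have ht : (0:ℝ) ≤ t := le_trans hτ0 hτt
  have he1 : (-1:ℝ) < -H - 1/2 := by linarith
  have hexp : -H - 1/2 ≤ 0 := by linarith
  set m : ℝ := min ((1 + τ)/2) t with hm
  have hm0 : (0:ℝ) ≤ m := le_min (by linarith) ht
  have hmt : m ≤ t := min_le_right _ _
  have hmτ : m ≤ (1 + τ)/2 := min_le_left _ _
  have hint1 := ii_kernel he1 hexp τ 0 m le_rfl hm0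
  have hint2 := ii_kernel he1 hexp τ m t hm0 ht
  rw [← intervalIntegral.integral_add_adjacent_intervals hint1 hint2]
  have n1 : (0:ℝ) ≤ (1 + τ) ^ (-(2*H)) := Real.rpow_nonneg (by linarith) _
  have n2 : (0:ℝ) ≤ (1 + τ) ^ (-H - 1/2) := Real.rpow_nonneg (by linarith) _
  have n3 : (0:ℝ) ≤ (1 + t) ^ (1/2 - H) := Real.rpow_nonneg (by linarith) _
  have hp1 : (∫ u in (0:ℝ)..m, u ^ (-H - 1/2) * (1 + |u - τ|) ^ (-H - 1/2))
      ≤ 4/(1/2 - H) * (1 + τ) ^ (-(2*H)) := by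
    have hgint : IntervalIntegrable
        (fun u => ((1 + τ)/2) ^ (-H - 1/2) * u ^ (-H - 1/2)) volume 0 m :=
      (intervalIntegral.intervalIntegrable_rpow' he1).const_mul _
    have step := integral_le_of_le hm0 hgint
      (fun x hx => mul_nonneg (Real.rpow_nonneg (by linarith) _) (Real.rpow_nonneg hx.1 _))
      (fun x hx => by
        have hx2 : x ≤ (1 + τ)/2 := le_trans hx.2 hmτ
        have hbase : (1 + τ)/2 ≤ 1 + |x - τ| := by
          rcases le_total x τ with hxτ | hxτ
          · have : |x - τ| = τ - x := by rw [abs_of_nonpos (by linarith)]; ring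
            rw [this]; linarith
          · have hτ1 : τ ≤ 1 := by linarith
            have := abs_nonneg (x - τ); linarith
        have hb : (1 + |x - τ|) ^ (-H - 1/2) ≤ ((1 + τ)/2) ^ (-H - 1/2) :=
          Real.rpow_le_rpow_of_nonpos (by linarith) hbase hexp
        calc x ^ (-H - 1/2) * (1 + |x - τ|) ^ (-H - 1/2)
            ≤ x ^ (-H - 1/2) * ((1 + τ)/2) ^ (-H - 1/2) :=
              mul_le_mul_of_nonneg_left hb (Real.rpow_nonneg hx.1 _)
          _ = ((1 + τ)/2) ^ (-H - 1/2) * x ^ (-H - 1/2) := by ring)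
    rw [intervalIntegral.integral_const_mul, int_rpow_base h1 h2 hm0] at step
    refine step.trans ?_
    have c2 : m ^ (1/2 - H) ≤ ((1 + τ)/2) ^ (1/2 - H) :=
      Real.rpow_le_rpow hm0 hmτ (by linarith)
    have c3 : ((1 + τ)/2) ^ (-H - 1/2) * ((1 + τ)/2) ^ (1/2 - H)
        = ((1 + τ)/2) ^ (-(2*H)) := by
      rw [← Real.rpow_add (by linarith)]; congr 1; ring
    have c4 : ((1 + τ)/2) ^ (-(2*H)) ≤ 4 * (1 + τ) ^ (-(2*H)) :=
      div_two_rpow_le (by linarith) (by linarith) (by linarith)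
    have n4 : (0:ℝ) ≤ ((1 + τ)/2) ^ (-H - 1/2) := Real.rpow_nonneg (by linarith) _
    have n5 : (0:ℝ) ≤ m ^ (1/2 - H) := Real.rpow_nonneg hm0 _
    have n6 : (0:ℝ) ≤ ((1 + τ)/2) ^ (1/2 - H) := Real.rpow_nonneg (by linarith) _
    have main : ((1 + τ)/2) ^ (-H - 1/2) * m ^ (1/2 - H) ≤ 4 * (1 + τ) ^ (-(2*H)) := by
      have hprod := mul_le_mul_of_nonneg_left c2 n4
      rw [c3] at hprod
      linarith
    calc ((1 + τ)/2) ^ (-H - 1/2) * (m ^ (1/2 - H) / (1/2 - H))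
        = (((1 + τ)/2) ^ (-H - 1/2) * m ^ (1/2 - H)) / (1/2 - H) := by ring
      _ ≤ (4 * (1 + τ) ^ (-(2*H))) / (1/2 - H) := by gcongr
      _ = 4/(1/2 - H) * (1 + τ) ^ (-(2*H)) := by ring
  have hp2 : (∫ u in m..t, u ^ (-H - 1/2) * (1 + |u - τ|) ^ (-H - 1/2))
      ≤ 4/(1/2 - H) * ((1 + τ) ^ (-H - 1/2) * (1 + t) ^ (1/2 - H)) := by
    by_cases hc : t ≤ (1 + τ)/2
    · have hmeq : m = t := min_eq_right hc
      rw [hmeq, intervalIntegral.integral_same]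
      positivity
    · push_neg at hc
      have hmeq : m = (1 + τ)/2 := min_eq_left hc.le
      have hker : Continuous fun u : ℝ => (1 + |u - τ|) ^ (-H - 1/2) :=
        (continuous_const.add (continuous_id.sub continuous_const).abs).rpow_const
          (fun x => Or.inl (show (1 + |x - τ| : ℝ) ≠ 0 by positivity))
      have hgint : IntervalIntegrable
          (fun u => ((1 + τ)/2) ^ (-H - 1/2) * (1 + |u - τ|) ^ (-H - 1/2)) volume m t :=
        (hker.intervalIntegrable _ _).const_mul _
      have step := integral_le_of_le hmt hgint
        (fun x hx => mul_nonneg (Real.rpow_nonneg (by linarith) _)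
          (Real.rpow_nonneg (by positivity) _))
        (fun x hx => by
          have hx1 : (1 + τ)/2 ≤ x := by rw [hmeq] at hx; exact hx.1
          have hb : x ^ (-H - 1/2) ≤ ((1 + τ)/2) ^ (-H - 1/2) :=
            Real.rpow_le_rpow_of_nonpos (by linarith) hx1 hexp
          exact mul_le_mul_of_nonneg_right hb (Real.rpow_nonneg (by positivity) _))
      rw [intervalIntegral.integral_const_mul] at step
      refine step.trans ?_
      have hshift : (∫ u in m..t, (1 + |u - τ|) ^ (-H - 1/2))
          = ∫ x in (m - τ)..(t - τ), (1 + |x|) ^ (-H - 1/2) :=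
        intervalIntegral.integral_comp_sub_right (fun x => (1 + |x|) ^ (-H - 1/2)) τ
      have hbound2 : (∫ u in m..t, (1 + |u - τ|) ^ (-H - 1/2))
          ≤ 2 * (1 + t) ^ (1/2 - H) / (1/2 - H) := by
        rw [hshift]
        have hb := int_abs_kernel_le (p := -H - 1/2) (by intro hh; linarith)
          (R := t) (by linarith) (by linarith : m - τ ≤ t - τ) (by linarith)
        refine hb.trans ?_
        have hee : -H - 1/2 + 1 = 1/2 - H := by ring
        rw [hee]
        have hx0 : (0:ℝ) ≤ (1 + t) ^ (1/2 - H) := n3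
        have hmm : ((1 + t) ^ (1/2 - H) - 1) / (1/2 - H) ≤ (1 + t) ^ (1/2 - H) / (1/2 - H) := by
          gcongr
          linarith
        calc 2 * (((1 + t) ^ (1/2 - H) - 1) / (1/2 - H))
            ≤ 2 * ((1 + t) ^ (1/2 - H) / (1/2 - H)) := by linarith
          _ = 2 * (1 + t) ^ (1/2 - H) / (1/2 - H) := by ring
      have hdp : ((1 + τ)/2) ^ (-H - 1/2) ≤ 2 * (1 + τ) ^ (-H - 1/2) := by
        rw [Real.div_rpow (by linarith) (by norm_num)]
        have h2 := two_rpow_ge_half (by linarith : (-1:ℝ) ≤ -H - 1/2)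
        rw [div_le_iff₀ (by linarith : (0:ℝ) < (2:ℝ) ^ (-H - 1/2))]
        nlinarith
      have hintn : (0:ℝ) ≤ ∫ u in m..t, (1 + |u - τ|) ^ (-H - 1/2) :=
        intervalIntegral.integral_nonneg hmt
          (fun x _ => Real.rpow_nonneg (by positivity) _)
      have n4 : (0:ℝ) ≤ ((1 + τ)/2) ^ (-H - 1/2) := Real.rpow_nonneg (by linarith) _
      calc ((1 + τ)/2) ^ (-H - 1/2) * ∫ u in m..t, (1 + |u - τ|) ^ (-H - 1/2)
          ≤ (2 * (1 + τ) ^ (-H - 1/2)) * (2 * (1 + t) ^ (1/2 - H) / (1/2 - H)) := by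
            apply mul_le_mul hdp hbound2 hintn (by positivity)
        _ = 4/(1/2 - H) * ((1 + τ) ^ (-H - 1/2) * (1 + t) ^ (1/2 - H)) := by ring
  have hsum : 4/(1/2 - H) * (1 + τ) ^ (-(2*H))
      + 4/(1/2 - H) * ((1 + τ) ^ (-H - 1/2) * (1 + t) ^ (1/2 - H))
      = 4/(1/2 - H) * ((1 + τ) ^ (-(2*H))
        + (1 + τ) ^ (-H - 1/2) * (1 + t) ^ (1/2 - H)) := by ring
  linarith

set_option maxHeartbeats 2000000 in
/-- Variance bound (analytic core of the `p = 2` case of Proposition 6.1): for `H ∈ (0,1/2)`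
and a continuous even `c` with `|c(t)| ≤ C₀ (1+|t|)^{2H-2}`, there exist `κ > 0` and `C > 0`
such that for all `T ≥ 1`,
`(1/T²) ∫₀^T ∫₀^{t₁} (∫₀^{t₁}∫₀^{t₂} (t₁-s₁)^{-H-1/2}(t₂-s₂)^{-H-1/2}|c(s₁-s₂)| ds₂ ds₁)² dt₂ dt₁
  ≤ C T^{-κ}`. -/
theorem stmt_10 (H : ℝ) (hH : H ∈ Set.Ioo (0 : ℝ) (1/2)) (c : ℝ → ℝ)
    (hc : Continuous c) (heven : ∀ t : ℝ, c (-t) = c t)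
    (C₀ : ℝ) (hC₀ : 0 < C₀) (hbound : ∀ t : ℝ, |c t| ≤ C₀ * (1 + |t|) ^ (2*H - 2)) :
    ∃ κ > (0 : ℝ), ∃ C > (0 : ℝ), ∀ T ≥ (1 : ℝ),
      (1 / T ^ 2) * ∫ t₁ in (0 : ℝ)..T, ∫ t₂ in (0 : ℝ)..t₁,
          (∫ s₁ in (0 : ℝ)..t₁, ∫ s₂ in (0 : ℝ)..t₂,
            (t₁ - s₁) ^ (-H - 1/2) * (t₂ - s₂) ^ (-H - 1/2) * |c (s₁ - s₂)|) ^ 2 ≤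
        C * T ^ (-κ) := by
  obtain ⟨h1, h2⟩ := hH
  have he1 : (-1:ℝ) < -H - 1/2 := by linarith
  have hexp : -H - 1/2 ≤ 0 := by linarith
  have hp22 : 2*H - 2 ≤ 0 := by linarith
  obtain ⟨K₁, hK₁0, hK₁⟩ := lemG1 h1 h2
  obtain ⟨K₂, hK₂0, hK₂⟩ := lemG2 h1 h2
  set D : ℝ := C₀ * K₁ * K₂ with hD
  have hD0 : 0 < D := by positivity
  set E : ℝ := 2*D^2 * (1/(1 - 2*H)) + 2*D^2 * (1/(2*H)) with hE
  have hE0 : 0 < E := by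
    have : (0:ℝ) < 1 - 2*H := by linarith
    positivity
  have hpos2H : (0:ℝ) < 1 - 2*H := by linarith
  have h2H0 : (0:ℝ) < 2*H := by linarith
  have hpos22 : (0:ℝ) < 2 - 2*H := by linarith
  refine ⟨2*H, by linarith, 4*E/(2 - 2*H), by positivity, ?_⟩
  intro T hT
  have hT0 : (0:ℝ) < T := by linarith
  -- Step A : innermost bound
  have stepA : ∀ t₂ s₁ : ℝ, 0 ≤ t₂ →
      (∫ s₂ in (0:ℝ)..t₂, (t₂ - s₂) ^ (-H - 1/2) * |c (s₁ - s₂)|)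
        ≤ C₀ * K₁ * (1 + |t₂ - s₁|) ^ (-H - 1/2) := by
    intro t₂ s₁ ht₂
    set F : ℝ → ℝ := fun v => v ^ (-H - 1/2) * (1 + |v - (t₂ - s₁)|) ^ (2*H - 2) with hF
    have hgint : IntervalIntegrable (fun s₂ => C₀ * F (t₂ - s₂)) volume 0 t₂ := by
      have h := (ii_kernel he1 hp22 (t₂ - s₁) 0 t₂ le_rfl ht₂).comp_sub_left t₂
      simp only [sub_zero, sub_self] at h
      exact (h.symm).const_mul C₀
    have step := integral_le_of_le ht₂ hgint
      (fun x hx => by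
        apply mul_nonneg hC₀.le
        exact mul_nonneg (Real.rpow_nonneg (by linarith [hx.1, hx.2]) _)
          (Real.rpow_nonneg (by positivity) _))
      (fun x hx => by
        have hb1 : |c (s₁ - x)| ≤ C₀ * (1 + |s₁ - x|) ^ (2*H - 2) := hbound _
        have habs : |s₁ - x| = |(t₂ - x) - (t₂ - s₁)| := by congr 1; ring
        have hr : (0:ℝ) ≤ (t₂ - x) ^ (-H - 1/2) := Real.rpow_nonneg (by linarith [hx.2]) _
        calc (t₂ - x) ^ (-H - 1/2) * |c (s₁ - x)|
            ≤ (t₂ - x) ^ (-H - 1/2) * (C₀ * (1 + |s₁ - x|) ^ (2*H - 2)) :=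
              mul_le_mul_of_nonneg_left hb1 hr
          _ = C₀ * F (t₂ - x) := by rw [hF]; simp only [habs]; ring)
    rw [intervalIntegral.integral_const_mul] at step
    have hcomp : (∫ s₂ in (0:ℝ)..t₂, F (t₂ - s₂)) = ∫ v in (0:ℝ)..t₂, F v := by
      have h := intervalIntegral.integral_comp_sub_left (a := 0) (b := t₂) F t₂
      simpa only [sub_zero, sub_self] using h
    rw [hcomp] at step
    refine step.trans ?_
    rw [mul_assoc]
    exact mul_le_mul_of_nonneg_left (hK₁ (t₂ - s₁) t₂ ht₂) hC₀.le
  -- Step B : bound on the double integral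
  have stepB : ∀ t₁ t₂ : ℝ, 0 ≤ t₂ → t₂ ≤ t₁ →
      (∫ s₁ in (0:ℝ)..t₁, ∫ s₂ in (0:ℝ)..t₂,
          (t₁ - s₁) ^ (-H - 1/2) * (t₂ - s₂) ^ (-H - 1/2) * |c (s₁ - s₂)|)
        ≤ D * ((1 + (t₁ - t₂)) ^ (-(2*H))
            + (1 + (t₁ - t₂)) ^ (-H - 1/2) * (1 + t₁) ^ (1/2 - H)) := by
    intro t₁ t₂ ht₂ ht₂₁
    have ht₁ : (0:ℝ) ≤ t₁ := le_trans ht₂ ht₂₁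
    set G : ℝ → ℝ := fun u => u ^ (-H - 1/2) * (1 + |u - (t₁ - t₂)|) ^ (-H - 1/2) with hG
    have hgint : IntervalIntegrable (fun s₁ => (C₀ * K₁) * G (t₁ - s₁)) volume 0 t₁ := by
      have h := (ii_kernel he1 hexp (t₁ - t₂) 0 t₁ le_rfl ht₁).comp_sub_left t₁
      simp only [sub_zero, sub_self] at h
      exact (h.symm).const_mul _
    have step := integral_le_of_le ht₁ hgint
      (fun x hx => by
        apply mul_nonneg (by positivity)
        exact mul_nonneg (Real.rpow_nonneg (by linarith [hx.1, hx.2]) _)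
          (Real.rpow_nonneg (by positivity) _))
      (fun x hx => by
        have hrw : (∫ s₂ in (0:ℝ)..t₂,
            (t₁ - x) ^ (-H - 1/2) * (t₂ - s₂) ^ (-H - 1/2) * |c (x - s₂)|)
            = (t₁ - x) ^ (-H - 1/2) *
              ∫ s₂ in (0:ℝ)..t₂, (t₂ - s₂) ^ (-H - 1/2) * |c (x - s₂)| := by
          rw [← intervalIntegral.integral_const_mul]
          apply intervalIntegral.integral_congr
          intro y _
          simp only []
          ring
        have hr : (0:ℝ) ≤ (t₁ - x) ^ (-H - 1/2) := Real.rpow_nonneg (by linarith [hx.2]) _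
        have hA := stepA t₂ x ht₂
        calc (∫ s₂ in (0:ℝ)..t₂,
              (t₁ - x) ^ (-H - 1/2) * (t₂ - s₂) ^ (-H - 1/2) * |c (x - s₂)|)
            = (t₁ - x) ^ (-H - 1/2) *
              ∫ s₂ in (0:ℝ)..t₂, (t₂ - s₂) ^ (-H - 1/2) * |c (x - s₂)| := hrw
          _ ≤ (t₁ - x) ^ (-H - 1/2) * (C₀ * K₁ * (1 + |t₂ - x|) ^ (-H - 1/2)) :=
              mul_le_mul_of_nonneg_left hA hr
          _ = (C₀ * K₁) * G (t₁ - x) := by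
              rw [hG]
              have habs : |t₂ - x| = |(t₁ - x) - (t₁ - t₂)| := by congr 1; ring
              simp only [habs]
              ring)
    rw [intervalIntegral.integral_const_mul] at step
    have hcomp : (∫ s₁ in (0:ℝ)..t₁, G (t₁ - s₁)) = ∫ u in (0:ℝ)..t₁, G u := by
      have h := intervalIntegral.integral_comp_sub_left (a := 0) (b := t₁) G t₁
      simpa only [sub_zero, sub_self] using h
    rw [hcomp] at step
    refine step.trans ?_
    have hK2ap := hK₂ (t₁ - t₂) t₁ (by linarith) (by linarith)
    calc (C₀ * K₁) * ∫ u in (0:ℝ)..t₁, G u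
        ≤ (C₀ * K₁) * (K₂ * ((1 + (t₁ - t₂)) ^ (-(2*H))
            + (1 + (t₁ - t₂)) ^ (-H - 1/2) * (1 + t₁) ^ (1/2 - H))) :=
          mul_le_mul_of_nonneg_left hK2ap (by positivity)
      _ = D * ((1 + (t₁ - t₂)) ^ (-(2*H))
            + (1 + (t₁ - t₂)) ^ (-H - 1/2) * (1 + t₁) ^ (1/2 - H)) := by rw [hD]; ring
  -- Step C : inner square integral in t₂
  have stepC : ∀ t₁ : ℝ, 0 ≤ t₁ →
      (∫ t₂ in (0:ℝ)..t₁,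
          (∫ s₁ in (0:ℝ)..t₁, ∫ s₂ in (0:ℝ)..t₂,
            (t₁ - s₁) ^ (-H - 1/2) * (t₂ - s₂) ^ (-H - 1/2) * |c (s₁ - s₂)|) ^ 2)
        ≤ E * (1 + t₁) ^ (1 - 2*H) := by
    intro t₁ ht₁
    set ψ : ℝ → ℝ := fun t₂ => 2*D^2 * (1 + (t₁ - t₂)) ^ (-(2*H))
        + (2*D^2 * (1 + t₁) ^ (1 - 2*H)) * (1 + (t₁ - t₂)) ^ (-(2*H) - 1) with hψ
    have hbase : ∀ x ∈ Set.uIcc (0:ℝ) t₁, (0:ℝ) < 1 + (t₁ - x) := by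
      intro x hx
      rw [Set.uIcc_of_le ht₁] at hx
      linarith [hx.2]
    have hcont : ∀ p : ℝ, ContinuousOn (fun t₂ : ℝ => (1 + (t₁ - t₂)) ^ p)
        (Set.uIcc (0:ℝ) t₁) := by
      intro p
      apply ContinuousOn.rpow_const
      · exact (continuous_const.add (continuous_const.sub continuous_id)).continuousOn
      · intro x hx; exact Or.inl (ne_of_gt (hbase x hx))
    have hint1 : IntervalIntegrable (fun t₂ : ℝ => (1 + (t₁ - t₂)) ^ (-(2*H)))
        volume 0 t₁ := (hcont _).intervalIntegrable
    have hint2 : IntervalIntegrable (fun t₂ : ℝ => (1 + (t₁ - t₂)) ^ (-(2*H) - 1))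
        volume 0 t₁ := (hcont _).intervalIntegrable
    have hψint : IntervalIntegrable ψ volume 0 t₁ :=
      (hint1.const_mul _).add (hint2.const_mul _)
    have hle := integral_le_of_le ht₁ hψint
      (fun x hx => by
        have b1 : (0:ℝ) < 1 + (t₁ - x) := by linarith [hx.2]
        have r1 : (0:ℝ) ≤ (1 + (t₁ - x)) ^ (-(2*H)) := Real.rpow_nonneg b1.le _
        have r2 : (0:ℝ) ≤ (1 + (t₁ - x)) ^ (-(2*H) - 1) := Real.rpow_nonneg b1.le _
        have r3 : (0:ℝ) ≤ (1 + t₁) ^ (1 - 2*H) := Real.rpow_nonneg (by linarith) _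
        rw [hψ]
        exact add_nonneg (mul_nonneg (by positivity) r1)
          (mul_nonneg (mul_nonneg (by positivity) r3) r2))
      (fun t₂ ht₂ => by
        have ht₂0 := ht₂.1
        have ht₂₁ := ht₂.2
        set τ : ℝ := t₁ - t₂ with hτ
        have hτ0 : (0:ℝ) ≤ τ := by rw [hτ]; linarith
        have hBpos : (0:ℝ) ≤ ∫ s₁ in (0:ℝ)..t₁, ∫ s₂ in (0:ℝ)..t₂,
            (t₁ - s₁) ^ (-H - 1/2) * (t₂ - s₂) ^ (-H - 1/2) * |c (s₁ - s₂)| := by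
          apply intervalIntegral.integral_nonneg (le_trans ht₂0 ht₂₁)
          intro s₁ hs₁
          apply intervalIntegral.integral_nonneg ht₂0
          intro s₂ hs₂
          exact mul_nonneg (mul_nonneg (Real.rpow_nonneg (by linarith [hs₁.2]) _)
            (Real.rpow_nonneg (by linarith [hs₂.2]) _)) (abs_nonneg _)
        have hB := stepB t₁ t₂ ht₂0 ht₂₁
        set X : ℝ := (1 + τ) ^ (-(2*H)) with hX
        set Y : ℝ := (1 + τ) ^ (-H - 1/2) * (1 + t₁) ^ (1/2 - H) with hY
        have hsq := pow_le_pow_left₀ hBpos hB 2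
        refine hsq.trans ?_
        have hX0 : (0:ℝ) ≤ X := Real.rpow_nonneg (by linarith) _
        have hX1 : X ≤ 1 :=
          Real.rpow_le_one_of_one_le_of_nonpos (by linarith) (by linarith)
        have hY0 : (0:ℝ) ≤ Y :=
          mul_nonneg (Real.rpow_nonneg (by linarith) _) (Real.rpow_nonneg (by linarith) _)
        have hY2 : Y^2 = (1 + τ) ^ (-(2*H) - 1) * (1 + t₁) ^ (1 - 2*H) := by
          rw [hY, mul_pow, sq, sq, ← Real.rpow_add (by linarith : (0:ℝ) < 1 + τ),
            ← Real.rpow_add (by linarith : (0:ℝ) < 1 + t₁)]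
          congr 1 <;> ring_nf
        have hψval : ψ t₂ = 2*D^2 * X + (2*D^2 * (1 + t₁) ^ (1 - 2*H)) * (1 + τ) ^ (-(2*H) - 1) := by
          rw [hψ, hX]
        rw [hψval]
        have key : (D * (X + Y))^2 ≤ 2*D^2 * X + 2*D^2 * Y^2 := by
          nlinarith [mul_nonneg (sq_nonneg D) (sq_nonneg (X - Y)),
            mul_le_mul_of_nonneg_left hX1 (mul_nonneg (by positivity : (0:ℝ) ≤ 2*D^2) hX0)]
        refine key.trans ?_
        rw [hY2]
        ring_nf
        exact le_refl _)
    refine hle.trans ?_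
    -- evaluate ∫ ψ
    have hcomp1 : (∫ t₂ in (0:ℝ)..t₁, (1 + (t₁ - t₂)) ^ (-(2*H)))
        = ∫ x in (0:ℝ)..t₁, (1 + x) ^ (-(2*H)) := by
      have h := intervalIntegral.integral_comp_sub_left (a := 0) (b := t₁)
        (fun x => (1 + x) ^ (-(2*H))) t₁
      simpa only [sub_zero, sub_self] using h
    have hcomp2 : (∫ t₂ in (0:ℝ)..t₁, (1 + (t₁ - t₂)) ^ (-(2*H) - 1))
        = ∫ x in (0:ℝ)..t₁, (1 + x) ^ (-(2*H) - 1) := by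
      have h := intervalIntegral.integral_comp_sub_left (a := 0) (b := t₁)
        (fun x => (1 + x) ^ (-(2*H) - 1)) t₁
      simpa only [sub_zero, sub_self] using h
    have hv1 : (∫ x in (0:ℝ)..t₁, (1 + x) ^ (-(2*H))) ≤ (1 + t₁) ^ (1 - 2*H) / (1 - 2*H) := by
      rw [int_one_add (by intro hh; linarith) ht₁]
      have hee : -(2*H) + 1 = 1 - 2*H := by ring
      rw [hee]
      gcongr
      linarith [Real.rpow_nonneg (by linarith : (0:ℝ) ≤ 1 + t₁) (1 - 2*H)]
    have hv2 : (∫ x in (0:ℝ)..t₁, (1 + x) ^ (-(2*H) - 1)) ≤ 1 / (2*H) := by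
      rw [int_one_add (by intro hh; linarith) ht₁]
      have hee : -(2*H) - 1 + 1 = -(2*H) := by ring
      rw [hee]
      have h9 : ((1 + t₁) ^ (-(2*H)) - 1) / (-(2*H)) = (1 - (1 + t₁) ^ (-(2*H))) / (2*H) := by
        rw [div_eq_div_iff (by linarith) (by linarith)]; ring
      rw [h9]
      gcongr
      linarith [Real.rpow_nonneg (by linarith : (0:ℝ) ≤ 1 + t₁) (-(2*H))]
    have hsplit : (∫ t₂ in (0:ℝ)..t₁, ψ t₂)
        = 2*D^2 * (∫ t₂ in (0:ℝ)..t₁, (1 + (t₁ - t₂)) ^ (-(2*H)))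
          + (2*D^2 * (1 + t₁) ^ (1 - 2*H)) *
            ∫ t₂ in (0:ℝ)..t₁, (1 + (t₁ - t₂)) ^ (-(2*H) - 1) := by
      rw [hψ, intervalIntegral.integral_add (hint1.const_mul _) (hint2.const_mul _),
        intervalIntegral.integral_const_mul, intervalIntegral.integral_const_mul]
    rw [hsplit, hcomp1, hcomp2]
    have hr3 : (0:ℝ) ≤ (1 + t₁) ^ (1 - 2*H) := Real.rpow_nonneg (by linarith) _
    have b1 : 2*D^2 * (∫ x in (0:ℝ)..t₁, (1 + x) ^ (-(2*H)))
        ≤ 2*D^2 * ((1 + t₁) ^ (1 - 2*H) / (1 - 2*H)) :=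
      mul_le_mul_of_nonneg_left hv1 (by positivity)
    have b2 : (2*D^2 * (1 + t₁) ^ (1 - 2*H)) * (∫ x in (0:ℝ)..t₁, (1 + x) ^ (-(2*H) - 1))
        ≤ (2*D^2 * (1 + t₁) ^ (1 - 2*H)) * (1 / (2*H)) :=
      mul_le_mul_of_nonneg_left hv2 (by positivity)
    have hEeq : E * (1 + t₁) ^ (1 - 2*H)
        = 2*D^2 * ((1 + t₁) ^ (1 - 2*H) / (1 - 2*H))
          + (2*D^2 * (1 + t₁) ^ (1 - 2*H)) * (1 / (2*H)) := by
      rw [hE]; ring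
    exact le_trans (add_le_add b1 b2) (le_of_eq hEeq.symm)
  -- Step D : outer integral in t₁
  have hTnn : (0:ℝ) ≤ T := hT0.le
  have houter : (∫ t₁ in (0:ℝ)..T, ∫ t₂ in (0:ℝ)..t₁,
        (∫ s₁ in (0:ℝ)..t₁, ∫ s₂ in (0:ℝ)..t₂,
          (t₁ - s₁) ^ (-H - 1/2) * (t₂ - s₂) ^ (-H - 1/2) * |c (s₁ - s₂)|) ^ 2)
      ≤ 4*E/(2 - 2*H) * T ^ (2 - 2*H) := by
    have hgcont : ContinuousOn (fun t₁ : ℝ => E * (1 + t₁) ^ (1 - 2*H))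
        (Set.uIcc (0:ℝ) T) := by
      apply ContinuousOn.mul continuousOn_const
      apply ContinuousOn.rpow_const (continuous_const.add continuous_id).continuousOn
      intro x hx
      rw [Set.uIcc_of_le hTnn] at hx
      have hxx : (0:ℝ) < 1 + x := by linarith [hx.1]
      exact Or.inl hxx.ne'
    have hgint : IntervalIntegrable (fun t₁ : ℝ => E * (1 + t₁) ^ (1 - 2*H))
        volume 0 T := hgcont.intervalIntegrable
    have hle := integral_le_of_le hTnn hgint
      (fun x hx => by
        have : (0:ℝ) ≤ (1 + x) ^ (1 - 2*H) := Real.rpow_nonneg (by linarith [hx.1]) _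
        positivity)
      (fun t₁ ht₁ => stepC t₁ ht₁.1)
    refine hle.trans ?_
    rw [intervalIntegral.integral_const_mul, int_one_add (by intro hh; linarith) hTnn]
    have hee : 1 - 2*H + 1 = 2 - 2*H := by ring
    rw [hee]
    have hb1 : ((1 + T) ^ (2 - 2*H) - 1) / (2 - 2*H) ≤ (1 + T) ^ (2 - 2*H) / (2 - 2*H) := by
      gcongr
      linarith [Real.rpow_nonneg (by linarith : (0:ℝ) ≤ 1 + T) (2 - 2*H)]
    have hb2 : (1 + T) ^ (2 - 2*H) ≤ 4 * T ^ (2 - 2*H) := by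
      have h1T : (1 + T) ≤ 2*T := by linarith
      have e1 : (1 + T) ^ (2 - 2*H) ≤ (2*T) ^ (2 - 2*H) :=
        Real.rpow_le_rpow (by linarith) h1T (by linarith)
      have e2 : (2*T) ^ (2 - 2*H) = 2 ^ (2 - 2*H) * T ^ (2 - 2*H) :=
        Real.mul_rpow (by norm_num) hTnn
      have e3 : (2:ℝ) ^ (2 - 2*H) ≤ 4 := by
        have h4 : (2:ℝ) ^ ((2:ℕ):ℝ) = 4 := by rw [Real.rpow_natCast]; norm_num
        have := Real.rpow_le_rpow_of_exponent_le (by norm_num : (1:ℝ) ≤ 2)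
          (by push_cast; linarith : 2 - 2*H ≤ ((2:ℕ):ℝ))
        linarith
      have hr : (0:ℝ) ≤ T ^ (2 - 2*H) := Real.rpow_nonneg hTnn _
      nlinarith
    have hr : (0:ℝ) ≤ T ^ (2 - 2*H) := Real.rpow_nonneg hTnn _
    calc E * (((1 + T) ^ (2 - 2*H) - 1) / (2 - 2*H))
        ≤ E * ((1 + T) ^ (2 - 2*H) / (2 - 2*H)) := by
          apply mul_le_mul_of_nonneg_left hb1 hE0.le
      _ ≤ E * ((4 * T ^ (2 - 2*H)) / (2 - 2*H)) := by
          apply mul_le_mul_of_nonneg_left ?_ hE0.le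
          gcongr
      _ = 4*E/(2 - 2*H) * T ^ (2 - 2*H) := by ring
  -- conclude
  have hfin : (1 / T ^ 2) * (4*E/(2 - 2*H) * T ^ (2 - 2*H))
      = 4*E/(2 - 2*H) * T ^ (-(2*H)) := by
    have h2 : T ^ (2:ℕ) = T ^ ((2:ℕ):ℝ) := (Real.rpow_natCast T 2).symm
    have h3 : T ^ (2 - 2*H) / T ^ ((2:ℕ):ℝ) = T ^ (-(2*H)) := by
      rw [← Real.rpow_sub hT0]
      congr 1
      push_cast
      ring
    rw [h2]
    field_simp
    rw [← h3]
    field_simp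
  calc (1 / T ^ 2) * ∫ t₁ in (0 : ℝ)..T, ∫ t₂ in (0 : ℝ)..t₁,
          (∫ s₁ in (0 : ℝ)..t₁, ∫ s₂ in (0 : ℝ)..t₂,
            (t₁ - s₁) ^ (-H - 1/2) * (t₂ - s₂) ^ (-H - 1/2) * |c (s₁ - s₂)|) ^ 2
      ≤ (1 / T ^ 2) * (4*E/(2 - 2*H) * T ^ (2 - 2*H)) := by
        apply mul_le_mul_of_nonneg_left houter (by positivity)
    _ = 4*E/(2 - 2*H) * T ^ (-(2*H)) := hfin
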